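/- Let ℓ ≥ 1, let 1 ≤ r ≤ ℓ, let H be an ℓ×ℓ complex Hermitian matrix, and let a, b be real numbers with 0 < a ≤ b such that a·‖x‖² ≤ ⟨Hx, x⟩ ≤ b·‖x‖² for every x ∈ ℂ^ℓ. Then the r-th compound matrix C_r(H) is Hermitian and satisfies a^r·‖ξ‖² ≤ ⟨C_r(H)ξ, ξ⟩ ≤ b^r·‖ξ‖² for every vector ξ indexed by the r-element subsets of {1,…,ℓ}. -/

import Mathlib

open Matrix

/-- The `r`-th compound matrix of an `ℓ×ℓ` complex matrix `A`: the matrix indexed by the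
`r`-element subsets of `{1,…,ℓ}` (each listed in increasing order) whose `(I,J)` entry is the
determinant of the `r×r` submatrix of `A` with rows indexed by `I` and columns indexed by `J`. -/
def compound {ℓ : ℕ} (r : ℕ) (A : Matrix (Fin ℓ) (Fin ℓ) ℂ) :
    Matrix {s : Finset (Fin ℓ) // s.card = r} {s : Finset (Fin ℓ) // s.card = r} ℂ :=
  fun I J => (A.submatrix
    (fun i => ((I.1.orderIsoOfFin I.2) i : Fin ℓ))
    (fun j => ((J.1.orderIsoOfFin J.2) j : Fin ℓ))).det

/-- The Hermitian quadratic form `⟨Mx, x⟩ = Σᵢ conj(xᵢ)·(Mx)ᵢ` (real part). -/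
noncomputable def hermQF {n : Type*} [Fintype n] (M : Matrix n n ℂ) (x : n → ℂ) : ℝ :=
  (dotProduct (star x) (M.mulVec x)).re

/-- The squared norm `‖x‖² = Σᵢ |xᵢ|²` of a complex vector. -/
noncomputable def normSq' {n : Type*} [Fintype n] (x : n → ℂ) : ℝ :=
  ∑ i, ‖x i‖ ^ 2

open Finset Equiv Function

variable {ℓ r : ℕ}

lemma det_mul_expand (M : Matrix (Fin r) (Fin ℓ) ℂ) (N : Matrix (Fin ℓ) (Fin r) ℂ) :
    det (M * N) = ∑ f : Fin r → Fin ℓ,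
      (∏ i, N (f i) i) * det (M.submatrix id f) := by
  have h1 : det (M * N) = ∑ f : Fin r → Fin ℓ, ∑ σ : Perm (Fin r),
      (Equiv.Perm.sign σ : ℂ) * ∏ i, M (σ i) (f i) * N (f i) i := by
    simp only [det_apply', mul_apply, prod_univ_sum, Units.smul_def, zsmul_eq_mul,
      Finset.mul_sum, Fintype.piFinset_univ]
    rw [Finset.sum_comm]
  rw [h1]
  refine Finset.sum_congr rfl fun f _ => ?_
  rw [det_apply', Finset.mul_sum]
  refine Finset.sum_congr rfl fun σ _ => ?_
  simp only [submatrix_apply, id_eq, Finset.prod_mul_distrib, Units.smul_def, zsmul_eq_mul]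
  ring

lemma cauchyBinet (M : Matrix (Fin r) (Fin ℓ) ℂ) (N : Matrix (Fin ℓ) (Fin r) ℂ) :
    det (M * N) = ∑ s : {s : Finset (Fin ℓ) // s.card = r},
      det (M.submatrix id (fun j => s.1.orderEmbOfFin s.2 j)) *
      det (N.submatrix (fun j => s.1.orderEmbOfFin s.2 j) id) := by
  rw [det_mul_expand]
  rw [← Finset.sum_filter_add_sum_filter_not Finset.univ (fun f => Injective f)]
  have hz : ∑ f ∈ Finset.univ.filter (fun f : Fin r → Fin ℓ => ¬ Injective f),
      (∏ i, N (f i) i) * det (M.submatrix id f) = 0 := by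
    refine Finset.sum_eq_zero fun f hf => ?_
    have hni : ¬ Injective f := (Finset.mem_filter.mp hf).2
    rw [Injective] at hni; push_neg at hni
    obtain ⟨i, j, hfij, hij⟩ := hni
    rw [det_zero_of_column_eq hij (fun k => by simp [hfij]), mul_zero]
  rw [hz, add_zero]
  -- rewrite RHS as a double sum over (s, τ)
  have hrhs : ∀ s : {s : Finset (Fin ℓ) // s.card = r},
      det (M.submatrix id (fun j => s.1.orderEmbOfFin s.2 j)) *
      det (N.submatrix (fun j => s.1.orderEmbOfFin s.2 j) id)
      = ∑ τ : Perm (Fin r),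
        (∏ i, N (s.1.orderEmbOfFin s.2 (τ i)) i) *
          det (M.submatrix id (fun i => s.1.orderEmbOfFin s.2 (τ i))) := by
    intro s
    have hN : det (N.submatrix (fun j => s.1.orderEmbOfFin s.2 j) id)
        = ∑ τ : Perm (Fin r), (Perm.sign τ : ℂ) * ∏ i, N (s.1.orderEmbOfFin s.2 (τ i)) i := by
      rw [det_apply']
      refine Finset.sum_congr rfl fun τ _ => ?_
      simp [Units.smul_def, zsmul_eq_mul, submatrix_apply]
    rw [hN, Finset.mul_sum]
    refine Finset.sum_congr rfl fun τ _ => ?_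
    have hsub : (M.submatrix id fun i => s.1.orderEmbOfFin s.2 (τ i))
        = (M.submatrix id fun j => s.1.orderEmbOfFin s.2 j).submatrix id τ := rfl
    rw [hsub, det_permute']
    ring
  simp only [hrhs]
  rw [← Finset.sum_product' (s := Finset.univ) (t := Finset.univ)]
  refine (Finset.sum_bij
    (fun (p : {s : Finset (Fin ℓ) // s.card = r} × Perm (Fin r)) _ =>
      fun i => p.1.1.orderEmbOfFin p.1.2 (p.2 i)) ?_ ?_ ?_ ?_).symm
  · intro p _
    refine Finset.mem_filter.mpr ⟨Finset.mem_univ _, ?_⟩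
    exact (p.1.1.orderEmbOfFin p.1.2).injective.comp p.2.injective
  · intro p₁ hp₁ p₂ hp₂ h
    obtain ⟨⟨s₁, hs₁⟩, τ₁⟩ := p₁
    obtain ⟨⟨s₂, hs₂⟩, τ₂⟩ := p₂
    have h' : (fun i => s₁.orderEmbOfFin hs₁ (τ₁ i))
        = (fun i => s₂.orderEmbOfFin hs₂ (τ₂ i)) := h
    have hrange : Set.range (fun i => s₁.orderEmbOfFin hs₁ (τ₁ i))
        = Set.range (fun i => s₂.orderEmbOfFin hs₂ (τ₂ i)) := congrArg Set.range h'
    have hr1 : Set.range (fun i => s₁.orderEmbOfFin hs₁ (τ₁ i)) = ↑s₁ := by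
      show Set.range (⇑(s₁.orderEmbOfFin hs₁) ∘ ⇑τ₁) = ↑s₁
      rw [Set.range_comp, τ₁.surjective.range_eq, Set.image_univ,
        Finset.range_orderEmbOfFin]
    have hr2 : Set.range (fun i => s₂.orderEmbOfFin hs₂ (τ₂ i)) = ↑s₂ := by
      show Set.range (⇑(s₂.orderEmbOfFin hs₂) ∘ ⇑τ₂) = ↑s₂
      rw [Set.range_comp, τ₂.surjective.range_eq, Set.image_univ,
        Finset.range_orderEmbOfFin]
    have hs : s₁ = s₂ := Finset.coe_injective (hr1 ▸ hr2 ▸ hrange)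
    subst hs
    have hτ : τ₁ = τ₂ := Equiv.ext fun i =>
      (s₁.orderEmbOfFin hs₁).injective (congrFun h' i)
    simp [hτ]
  · intro f hf
    have hinj : Injective f := (Finset.mem_filter.mp hf).2
    set s : Finset (Fin ℓ) := Finset.image f Finset.univ with hsdef
    have hs : s.card = r := by
      rw [hsdef, Finset.card_image_of_injective _ hinj, Finset.card_univ, Fintype.card_fin]
    have hmem : ∀ i, f i ∈ s := fun i => Finset.mem_image_of_mem f (Finset.mem_univ i)
    set τ' : Fin r → Fin r := fun i => (s.orderIsoOfFin hs).symm ⟨f i, hmem i⟩ with hτ'def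
    have hτ'inj : Injective τ' := by
      intro i j hij
      apply hinj
      have := congrArg (s.orderIsoOfFin hs) hij
      simpa [hτ'def] using congrArg Subtype.val this
    refine ⟨(⟨s, hs⟩, Equiv.ofBijective τ' (Finite.injective_iff_bijective.mp hτ'inj)),
      Finset.mem_univ _, ?_⟩
    funext i
    show s.orderEmbOfFin hs (τ' i) = f i
    rw [← Finset.coe_orderIsoOfFin_apply, hτ'def]
    simp
  · intro p _
    rfl

lemma compound_apply' {ℓ : ℕ} (r : ℕ) (A : Matrix (Fin ℓ) (Fin ℓ) ℂ)
    (I J : {s : Finset (Fin ℓ) // s.card = r}) :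
    compound r A I J = (A.submatrix
      (fun i => I.1.orderEmbOfFin I.2 i) (fun j => J.1.orderEmbOfFin J.2 j)).det := rfl

lemma compound_mul {ℓ r : ℕ} (A B : Matrix (Fin ℓ) (Fin ℓ) ℂ) :
    compound r (A * B) = compound r A * compound r B := by
  ext I J
  rw [compound_apply', mul_apply]
  have h : (A * B).submatrix (fun i => I.1.orderEmbOfFin I.2 i) (fun j => J.1.orderEmbOfFin J.2 j)
      = (A.submatrix (fun i => I.1.orderEmbOfFin I.2 i) id) *
        (B.submatrix id (fun j => J.1.orderEmbOfFin J.2 j)) := by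
    ext i j; simp [mul_apply]
  rw [h, cauchyBinet]
  rfl

lemma compound_conjTranspose {ℓ r : ℕ} (A : Matrix (Fin ℓ) (Fin ℓ) ℂ) :
    compound r Aᴴ = (compound r A)ᴴ := by
  ext I J
  show det (Aᴴ.submatrix _ _) = star (det (A.submatrix _ _))
  rw [← det_conjTranspose]
  rfl

lemma compound_diagonal {ℓ r : ℕ} (d : Fin ℓ → ℂ) :
    compound r (diagonal d) = diagonal (fun I : {s : Finset (Fin ℓ) // s.card = r} =>
      ∏ i ∈ I.1, d i) := by
  ext I J
  by_cases hIJ : I = J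
  · subst hIJ
    rw [compound_apply', diagonal_apply_eq]
    have h : (diagonal d).submatrix (fun i => I.1.orderEmbOfFin I.2 i)
        (fun j => I.1.orderEmbOfFin I.2 j) = diagonal (fun i => d (I.1.orderEmbOfFin I.2 i)) := by
      ext i j
      rcases eq_or_ne i j with rfl | hij
      · simp
      · rw [submatrix_apply, diagonal_apply_ne _ (fun hc => hij ((I.1.orderEmbOfFin I.2).injective hc)),
          diagonal_apply_ne _ hij]
    rw [h, det_diagonal]
    exact Finset.prod_bij (fun i _ => I.1.orderEmbOfFin I.2 i)
      (fun i _ => Finset.orderEmbOfFin_mem _ _ _)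
      (fun i _ j _ hij => (I.1.orderEmbOfFin I.2).injective hij)
      (fun x hx => by
        have hx' : x ∈ Set.range (I.1.orderEmbOfFin I.2) := by
          rw [Finset.range_orderEmbOfFin]; exact hx
        obtain ⟨i, hi⟩ := hx'
        exact ⟨i, Finset.mem_univ _, hi⟩)
      (fun i _ => rfl)
  · rw [compound_apply', diagonal_apply_ne _ hIJ]
    have hex : ∃ x ∈ I.1, x ∉ J.1 := by
      by_contra hc
      push_neg at hc
      exact hIJ (Subtype.ext (Finset.eq_of_subset_of_card_le hc (by rw [I.2, J.2])))
    obtain ⟨x, hxI, hxJ⟩ := hex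
    obtain ⟨i₀, hi₀⟩ : ∃ i₀, I.1.orderEmbOfFin I.2 i₀ = x := by
      have hx' : x ∈ Set.range (I.1.orderEmbOfFin I.2) := by
        rw [Finset.range_orderEmbOfFin]; exact hxI
      exact hx'
    refine det_eq_zero_of_row_eq_zero i₀ fun j => ?_
    rw [submatrix_apply, diagonal_apply_ne]
    rw [hi₀]
    intro hc
    exact hxJ (hc ▸ Finset.orderEmbOfFin_mem J.1 J.2 j)

lemma compound_one {ℓ r : ℕ} : compound r (1 : Matrix (Fin ℓ) (Fin ℓ) ℂ) = 1 := by
  rw [← diagonal_one, compound_diagonal]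
  simp

lemma normSq'_eq {n : Type*} [Fintype n] (x : n → ℂ) :
    normSq' x = (dotProduct (star x) x).re := by
  simp only [normSq', dotProduct, Pi.star_apply, Complex.re_sum]
  refine Finset.sum_congr rfl fun i _ => ?_
  rw [Complex.star_def, ← Complex.normSq_eq_conj_mul_self, Complex.sq_norm]
  simp
/-- If `H` is an `ℓ×ℓ` Hermitian matrix with `a·‖x‖² ≤ ⟨Hx,x⟩ ≤ b·‖x‖²` for `0 < a ≤ b`, then the
`r`-th compound matrix `C_r(H)` is Hermitian and satisfies
`a^r·‖ξ‖² ≤ ⟨C_r(H)ξ,ξ⟩ ≤ b^r·‖ξ‖²`. -/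
theorem compound_hermitian_bounds (ℓ r : ℕ) (hℓ : 1 ≤ ℓ) (hr1 : 1 ≤ r) (hr : r ≤ ℓ)
    (H : Matrix (Fin ℓ) (Fin ℓ) ℂ) (hH : H.IsHermitian)
    (a b : ℝ) (ha : 0 < a) (hab : a ≤ b)
    (hbound : ∀ x : Fin ℓ → ℂ, a * normSq' x ≤ hermQF H x ∧ hermQF H x ≤ b * normSq' x) :
    (compound r H).IsHermitian ∧
      ∀ ξ : {s : Finset (Fin ℓ) // s.card = r} → ℂ,
        a ^ r * normSq' ξ ≤ hermQF (compound r H) ξ ∧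
        hermQF (compound r H) ξ ≤ b ^ r * normSq' ξ := by
  -- Hermitian part
  have hherm : (compound r H).IsHermitian := by
    show (compound r H)ᴴ = compound r H
    rw [← compound_conjTranspose, hH.eq]
  refine ⟨hherm, ?_⟩
  -- spectral decomposition
  set U : Matrix (Fin ℓ) (Fin ℓ) ℂ := (hH.eigenvectorUnitary : Matrix (Fin ℓ) (Fin ℓ) ℂ) with hUdef
  set lam : Fin ℓ → ℝ := hH.eigenvalues with hlamdef
  have hmem := Unitary.mem_iff.mp hH.eigenvectorUnitary.2
  have hU1 : U * Uᴴ = 1 := by rw [← star_eq_conjTranspose]; exact hmem.2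
  have hU2 : Uᴴ * U = 1 := by rw [← star_eq_conjTranspose]; exact hmem.1
  have hspec : H = U * diagonal (fun i => (lam i : ℂ)) * Uᴴ := by
    have := hH.spectral_theorem
    rw [Unitary.conjStarAlgAut_apply, star_eq_conjTranspose] at this
    exact this
  -- eigenvalue bounds
  have hlam : ∀ i, a ≤ lam i ∧ lam i ≤ b := by
    intro i
    set v : Fin ℓ → ℂ := ⇑(hH.eigenvectorBasis i) with hvdef
    have hval : lam i = hermQF H v := by
      rw [hlamdef, hH.eigenvalues_eq i, hermQF]
      rfl
    have hnorm1 : normSq' v = 1 := by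
      have h1 : ‖hH.eigenvectorBasis i‖ = 1 := hH.eigenvectorBasis.orthonormal.1 i
      have h2 : ‖hH.eigenvectorBasis i‖ = Real.sqrt (∑ j, ‖v j‖ ^ 2) :=
        EuclideanSpace.norm_eq _
      have h3 : Real.sqrt (∑ j, ‖v j‖ ^ 2) = 1 := h2 ▸ h1
      have h4 : (∑ j, ‖v j‖ ^ 2) = 1 := by
        have hnn : (0:ℝ) ≤ ∑ j, ‖v j‖ ^ 2 :=
          Finset.sum_nonneg fun j _ => sq_nonneg _
        nlinarith [Real.sq_sqrt hnn]
      rw [normSq']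
      simpa using h4
    have hb := hbound v
    rw [hnorm1, mul_one, mul_one, ← hval] at hb
    exact hb
  -- compound decomposition
  set V := compound r U with hVdef
  set mu : {s : Finset (Fin ℓ) // s.card = r} → ℝ := fun I => ∏ i ∈ I.1, lam i with hmudef
  have hmu : ∀ I, a ^ r ≤ mu I ∧ mu I ≤ b ^ r := by
    intro I
    constructor
    · calc a ^ r = ∏ _i ∈ I.1, a := by rw [Finset.prod_const, I.2]
        _ ≤ ∏ i ∈ I.1, lam i :=
          Finset.prod_le_prod (fun _ _ => le_of_lt ha) (fun i _ => (hlam i).1)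
    · calc mu I ≤ ∏ _i ∈ I.1, b :=
          Finset.prod_le_prod (fun i _ => le_of_lt (lt_of_lt_of_le ha (hlam i).1))
            (fun i _ => (hlam i).2)
        _ = b ^ r := by rw [Finset.prod_const, I.2]
  have hCdiag : compound r (diagonal (fun i => (lam i : ℂ)))
      = diagonal (fun I => (mu I : ℂ)) := by
    rw [compound_diagonal]
    congr 1
    funext I
    rw [hmudef]
    push_cast
    rfl
  have hC : compound r H = V * diagonal (fun I => (mu I : ℂ)) * Vᴴ := by
    rw [hspec, compound_mul, compound_mul, hCdiag, compound_conjTranspose]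
  have hV1 : V * Vᴴ = 1 := by
    rw [hVdef, ← compound_conjTranspose, ← compound_mul, hU1, compound_one]
  -- quadratic form
  intro ξ
  set η := Vᴴ *ᵥ ξ with hηdef
  have hdot1 : dotProduct (star ξ) ((compound r H) *ᵥ ξ)
      = dotProduct (star η) ((diagonal (fun I => (mu I : ℂ))) *ᵥ η) := by
    rw [hC]
    calc dotProduct (star ξ) ((V * diagonal (fun I => (mu I : ℂ)) * Vᴴ) *ᵥ ξ)
        = dotProduct (star ξ) (V *ᵥ ((diagonal (fun I => (mu I : ℂ)) * Vᴴ) *ᵥ ξ)) := by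
          rw [mulVec_mulVec, mul_assoc]
      _ = dotProduct (star ξ ᵥ* V) ((diagonal (fun I => (mu I : ℂ)) * Vᴴ) *ᵥ ξ) :=
          dotProduct_mulVec _ _ _
      _ = dotProduct (star η) ((diagonal (fun I => (mu I : ℂ))) *ᵥ η) := by
          rw [hηdef, star_mulVec, conjTranspose_conjTranspose, mulVec_mulVec]
  have hdot2 : dotProduct (star ξ) ξ = dotProduct (star η) η := by
    calc dotProduct (star ξ) ξ
        = dotProduct (star ξ) ((V * Vᴴ) *ᵥ ξ) := by rw [hV1, one_mulVec]
      _ = dotProduct (star ξ) (V *ᵥ (Vᴴ *ᵥ ξ)) := by rw [mulVec_mulVec]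
      _ = dotProduct (star ξ ᵥ* V) (Vᴴ *ᵥ ξ) := dotProduct_mulVec _ _ _
      _ = dotProduct (star η) η := by
          rw [hηdef, star_mulVec, conjTranspose_conjTranspose]
  have hQF : hermQF (compound r H) ξ = ∑ I, mu I * ‖η I‖ ^ 2 := by
    rw [hermQF, hdot1, dotProduct, Complex.re_sum]
    refine Finset.sum_congr rfl fun I _ => ?_
    rw [mulVec_diagonal, Pi.star_apply]
    have : star (η I) * ((mu I : ℂ) * η I)
        = ((mu I * ‖η I‖ ^ 2 : ℝ) : ℂ) := by
      rw [Complex.star_def, Complex.sq_norm]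
      push_cast
      rw [mul_comm ((starRingEnd ℂ) (η I)), mul_assoc, Complex.mul_conj]
    rw [this, Complex.ofReal_re]
  have hNS : normSq' ξ = ∑ I, ‖η I‖ ^ 2 := by
    rw [normSq'_eq, hdot2, ← normSq'_eq, normSq']
  rw [hQF, hNS]
  constructor
  · rw [Finset.mul_sum]
    exact Finset.sum_le_sum fun I _ =>
      mul_le_mul_of_nonneg_right (hmu I).1 (sq_nonneg _)
  · rw [Finset.mul_sum]
    exact Finset.sum_le_sum fun I _ =>
      mul_le_mul_of_nonneg_right (hmu I).2 (sq_nonneg _)
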